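/- For every ε ∈ (0,1], the function h defined by h(x) = 6x²(1 − ε U((x₀−x)/x₀)) for 0 ≤ x < x₀ and h(x) = 6x² for x ≥ x₀, where U(τ) = (7τ² − 8τ + 2)τ² and x₀ = (3/5)^{1/4}, is nonnegative and nondecreasing on [0, ∞). -/

import Mathlib

noncomputable def U (τ : ℝ) : ℝ := (7 * τ^2 - 8 * τ + 2) * τ^2

noncomputable def x₀ : ℝ := (3/5 : ℝ) ^ ((1:ℝ)/4)

noncomputable def h (ε x : ℝ) : ℝ :=
  if x < x₀ then 6 * x^2 * (1 - ε * U ((x₀ - x) / x₀)) else 6 * x^2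

lemma x₀_pos : 0 < x₀ := by unfold x₀; positivity

noncomputable def g (ε x : ℝ) : ℝ := 6 * x^2 * (1 - ε * U ((x₀ - x) / x₀))

lemma one_sub_eps_U_nonneg {ε t : ℝ} (hε0 : 0 < ε) (hε1 : ε ≤ 1) (h0 : 0 ≤ t)
    (h1 : t ≤ 1) : 0 ≤ 1 - ε * U t := by
  rcases le_or_gt (U t) 0 with hU | hU
  · nlinarith
  · have hUle : U t ≤ 1 := by
      unfold U
      nlinarith [mul_nonneg (sub_nonneg.2 h1) (show (0:ℝ) ≤ 7*t^3 - t^2 + t + 1 by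
        nlinarith [pow_nonneg h0 3, mul_nonneg h0 (sub_nonneg.2 h1)])]
    nlinarith

lemma key {ε t : ℝ} (hε0 : 0 ≤ ε) (hε1 : ε ≤ 1) (h0 : 0 ≤ t) (h1 : t ≤ 1) :
    0 ≤ 2 * (1 - ε * U t) + ε * (1 - t) * (28*t^3 - 24*t^2 + 4*t) := by
  have hG : 0 ≤ 42*t^3 - 26*t^2 + 6*t + 2 := by
    nlinarith [mul_nonneg h0 (sq_nonneg (t - 13/63)), sq_nonneg t]
  have hp : 0 ≤ ε * (1 - t) * (42*t^3 - 26*t^2 + 6*t + 2) :=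
    mul_nonneg (mul_nonneg hε0 (by linarith)) hG
  unfold U
  nlinarith [hp]

lemma hasDerivAt_g (ε x : ℝ) :
    HasDerivAt (g ε)
      (12 * x * (1 - ε * U ((x₀ - x) / x₀)) +
        6 * x^2 * (ε * (28*((x₀ - x) / x₀)^3 - 24*((x₀ - x) / x₀)^2 + 4*((x₀ - x) / x₀)) / x₀)) x := by
  set t := (x₀ - x) / x₀ with htdef
  have ht : HasDerivAt (fun y : ℝ => (x₀ - y) / x₀) (-1 / x₀) x := by
    simpa using ((hasDerivAt_id x).const_sub x₀).div_const x₀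
  have hU : HasDerivAt U (28*t^3 - 24*t^2 + 4*t) t := by
    have h1 : HasDerivAt (fun τ : ℝ => 7 * τ^2 - 8 * τ + 2) (14*t - 8) t := by
      have := (((hasDerivAt_pow 2 t).const_mul (7:ℝ)).sub
        ((hasDerivAt_id t).const_mul (8:ℝ))).add_const (2:ℝ)
      convert this using 1 <;> first | rfl | (push_cast; ring)
    have h2 := h1.mul (hasDerivAt_pow 2 t)
    have : HasDerivAt (fun τ : ℝ => (7 * τ^2 - 8 * τ + 2) * τ^2)
        (28*t^3 - 24*t^2 + 4*t) t := by
      convert h2 using 1 <;> first | rfl | (push_cast; ring)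
    exact this
  have hcomp : HasDerivAt (fun y : ℝ => U ((x₀ - y) / x₀))
      ((28*t^3 - 24*t^2 + 4*t) * (-1 / x₀)) x := HasDerivAt.comp (h := fun y : ℝ => (x₀ - y) / x₀) x hU ht
  have hg := ((hasDerivAt_pow 2 x).const_mul (6:ℝ)).mul
    ((hcomp.const_mul ε).const_sub 1)
  have heq : HasDerivAt (fun y : ℝ => 6 * y^2 * (1 - ε * U ((x₀ - y) / x₀)))
      (12 * x * (1 - ε * U t) +
        6 * x^2 * (ε * (28*t^3 - 24*t^2 + 4*t) / x₀)) x := by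
    convert hg using 1 <;> first | rfl | (push_cast; ring) | (push_cast; rw [← htdef]; ring) | (simp only [← htdef]; push_cast; ring)
  exact heq

lemma g_mono (ε : ℝ) (hε0 : 0 < ε) (hε1 : ε ≤ 1) :
    MonotoneOn (g ε) (Set.Icc 0 x₀) := by
  apply monotoneOn_of_deriv_nonneg (convex_Icc 0 x₀)
  · exact fun x _ => (hasDerivAt_g ε x).continuousAt.continuousWithinAt
  · exact fun x _ => (hasDerivAt_g ε x).differentiableAt.differentiableWithinAt
  · intro x hx
    rw [interior_Icc] at hx
    rw [(hasDerivAt_g ε x).deriv]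
    set t := (x₀ - x) / x₀ with htdef
    have hc := x₀_pos
    have hxt : x = x₀ * (1 - t) := by rw [htdef]; field_simp; ring
    have ht0 : 0 ≤ t := div_nonneg (by linarith [hx.2]) hc.le
    have ht1 : t ≤ 1 := by
      rw [div_le_one hc]; linarith [hx.1]
    have hk := key hε0.le hε1 ht0 ht1
    calc (0:ℝ) ≤ 6 * x₀ * (1 - t) *
          (2 * (1 - ε * U t) + ε * (1 - t) * (28*t^3 - 24*t^2 + 4*t)) := by
          apply mul_nonneg _ hk
          have h1t : 0 ≤ 1 - t := by
            rw [htdef, sub_nonneg, div_le_one hc]; linarith [hx.1]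
          exact mul_nonneg (by positivity) h1t
      _ = 12 * x * (1 - ε * U t) + 6 * x^2 * (ε * (28*t^3 - 24*t^2 + 4*t) / x₀) := by
          rw [hxt]; field_simp; ring

lemma h_eq_g (ε : ℝ) : ∀ x ∈ Set.Icc (0:ℝ) x₀, h ε x = g ε x := by
  intro x hx
  unfold h g
  split_ifs with hlt
  · rfl
  · have hxx : x = x₀ := le_antisymm hx.2 (not_lt.1 hlt)
    subst hxx
    simp [U]

theorem h_nonneg_monotone (ε : ℝ) (hε0 : 0 < ε) (hε1 : ε ≤ 1) :
    (∀ x ∈ Set.Ici (0:ℝ), 0 ≤ h ε x) ∧ MonotoneOn (h ε) (Set.Ici 0) := by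
  have hc := x₀_pos
  constructor
  · intro x hx
    simp only [Set.mem_Ici] at hx
    unfold h
    split_ifs with hlt
    · have ht0 : 0 ≤ (x₀ - x) / x₀ := div_nonneg (by linarith) hc.le
      have ht1 : (x₀ - x) / x₀ ≤ 1 := by rw [div_le_one hc]; linarith
      have := one_sub_eps_U_nonneg hε0 hε1 ht0 ht1
      positivity
    · positivity
  · intro x hx y hy hxy
    simp only [Set.mem_Ici] at hx hy
    have hmg := g_mono ε hε0 hε1
    by_cases hyc : y < x₀
    · have hxc : x < x₀ := lt_of_le_of_lt hxy hyc
      rw [h_eq_g ε x ⟨hx, hxc.le⟩, h_eq_g ε y ⟨hy, hyc.le⟩]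
      exact hmg ⟨hx, hxc.le⟩ ⟨hy, hyc.le⟩ hxy
    · push_neg at hyc
      have hyval : h ε y = 6 * y^2 := by unfold h; rw [if_neg (not_lt.2 hyc)]
      by_cases hxc : x < x₀
      · have h1 : h ε x ≤ g ε x₀ := by
          rw [h_eq_g ε x ⟨hx, hxc.le⟩]
          exact hmg ⟨hx, hxc.le⟩ ⟨hc.le, le_refl _⟩ hxc.le
        have h2 : g ε x₀ = 6 * x₀^2 := by unfold g; simp [U]
        have h3 : 6 * x₀^2 ≤ 6 * y^2 := by nlinarith
        rw [hyval]; rw [h2] at h1; linarith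
      · push_neg at hxc
        have hxval : h ε x = 6 * x^2 := by unfold h; rw [if_neg (not_lt.2 hxc)]
        rw [hxval, hyval]; nlinarith
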